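/- arXiv:2409.06319 — 2 statements merged into one kernel-verified Lean document; each statement's English description precedes it below -/
import Mathlib

section
/- Let ρ > 0, C ≥ 0 and γ ≥ 2 be real numbers, and for t ∈ ℕ set η_t = 2/(ρ(t+γ)). Let (D_t)_{t≥0} be a sequence of nonnegative real numbers satisfying D_{t+1} ≤ (1 − η_t ρ) D_t + η_t² C for every t ≥ 0. Then for every t ≥ 0, D_t ≤ max{ 4C/ρ², (γ+1) D_0 } / (t + γ). -/
/-- Induction step of Theorem 1: a nonnegative sequence satisfying the SGD
recursion with step sizes η_t = 2/(ρ(t+γ)) decays at rate O(1/t). -/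
theorem stmt_1 (ρ C γ : ℝ) (hρ : 0 < ρ) (hC : 0 ≤ C) (hγ : 2 ≤ γ)
    (η : ℕ → ℝ) (hη : ∀ t : ℕ, η t = 2 / (ρ * (t + γ)))
    (D : ℕ → ℝ) (hDnn : ∀ t, 0 ≤ D t)
    (hrec : ∀ t : ℕ, D (t + 1) ≤ (1 - η t * ρ) * D t + η t ^ 2 * C) :
    ∀ t : ℕ, D t ≤ max (4 * C / ρ ^ 2) ((γ + 1) * D 0) / (t + γ) := by
  set M := max (4 * C / ρ ^ 2) ((γ + 1) * D 0) with hM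
  have hC' : 4 * C / ρ ^ 2 ≤ M := le_max_left _ _
  have hD0 : (γ + 1) * D 0 ≤ M := le_max_right _ _
  have hM0 : 0 ≤ M := le_trans (by positivity) hC'
  intro t
  induction t with
  | zero =>
    have hγ0 : (0:ℝ) < γ := by linarith
    push_cast
    rw [zero_add, le_div_iff₀ hγ0]
    nlinarith [hDnn 0]
  | succ t ih =>
    have hs : (2:ℝ) ≤ (t:ℝ) + γ := by
      have : (0:ℝ) ≤ (t:ℝ) := Nat.cast_nonneg t
      linarith
    have hs0 : (0:ℝ) < (t:ℝ) + γ := by linarith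
    have hrec' := hrec t
    rw [hη t] at hrec'
    have hηρ : 2 / (ρ * ((t:ℝ) + γ)) * ρ = 2 / ((t:ℝ) + γ) := by
      field_simp
    have hη2 : (2 / (ρ * ((t:ℝ) + γ))) ^ 2 * C = (4 * C / ρ ^ 2) / ((t:ℝ) + γ) ^ 2 := by
      field_simp; ring
    rw [hηρ, hη2] at hrec'
    have hfac : 0 ≤ 1 - 2 / ((t:ℝ) + γ) := by
      rw [sub_nonneg, div_le_one hs0]; linarith
    have hDt : D t ≤ M / ((t:ℝ) + γ) := ih
    have step1 : D (t + 1) ≤ (1 - 2 / ((t:ℝ) + γ)) * (M / ((t:ℝ) + γ)) + M / ((t:ℝ) + γ) ^ 2 := by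
      have h1 := mul_le_mul_of_nonneg_left hDt hfac
      have h2 : (4 * C / ρ ^ 2) / ((t:ℝ) + γ) ^ 2 ≤ M / ((t:ℝ) + γ) ^ 2 :=
        div_le_div_of_nonneg_right hC' (by positivity)
      linarith
    have hs1 : (0:ℝ) < (t:ℝ) + 1 + γ := by linarith
    push_cast
    rw [le_div_iff₀ hs1]
    have expand : (1 - 2 / ((t:ℝ) + γ)) * (M / ((t:ℝ) + γ)) + M / ((t:ℝ) + γ) ^ 2
        = ((t:ℝ) + γ - 1) * M / ((t:ℝ) + γ) ^ 2 := by
      field_simp; ring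
    rw [expand] at step1
    have key : ((t:ℝ) + γ - 1) * M / ((t:ℝ) + γ) ^ 2 * ((t:ℝ) + 1 + γ) ≤ M := by
      rw [div_mul_eq_mul_div, div_le_iff₀ (by positivity)]
      nlinarith
    calc D (t + 1) * ((t:ℝ) + 1 + γ)
        ≤ ((t:ℝ) + γ - 1) * M / ((t:ℝ) + γ) ^ 2 * ((t:ℝ) + 1 + γ) :=
          mul_le_mul_of_nonneg_right step1 (le_of_lt hs1)
      _ ≤ M := key
end

section
/- Let E be a real inner product space, K ≥ 1 and e ≥ 1 integers, and t₀ ≤ t natural numbers with t − t₀ ≤ e − 1. Let (η_τ)_{τ≥0} be nonnegative step sizes, let η > 0 be such that η_τ ≤ η_{t₀} for all τ with t₀ ≤ τ ≤ t − 1 and η_{t₀} ≤ 2η. For each k ∈ {1,…,K} let ζ_k ≥ 0 and let g_{k,τ} ∈ E satisfy ‖g_{k,τ}‖ ≤ ζ_k for all t₀ ≤ τ ≤ t − 1. Fix y ∈ E, set x_k = y − Σ_{τ=t₀}^{t−1} η_τ g_{k,τ} and x̄ = (1/K) Σ_{k=1}^{K} x_k. Then (1/K) Σ_{k=1}^{K}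 ‖x̄ − x_k‖² ≤ 4η²(e−1)² (1/K) Σ_{k=1}^{K} ζ_k². -/
/-- Lemma 1 (deterministic form): client-drift bound over a block of at most
e local SGD steps. -/
theorem stmt_3 {E : Type*} [NormedAddCommGroup E] [InnerProductSpace ℝ E]
    (K e : ℕ) (hK : 1 ≤ K) (he : 1 ≤ e)
    (t₀ t : ℕ) (ht₀ : t₀ ≤ t) (hte : t - t₀ ≤ e - 1)
    (η : ℕ → ℝ) (hηnn : ∀ τ, 0 ≤ η τ)
    (ηbar : ℝ) (hηbar : 0 < ηbar)
    (hmono : ∀ τ ∈ Finset.Ico t₀ t, η τ ≤ η t₀) (hη0 : η t₀ ≤ 2 * ηbar)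
    (ζ : Fin K → ℝ) (hζ : ∀ k, 0 ≤ ζ k)
    (g : Fin K → ℕ → E) (hg : ∀ k, ∀ τ ∈ Finset.Ico t₀ t, ‖g k τ‖ ≤ ζ k)
    (y : E) (x : Fin K → E) (hx : ∀ k, x k = y - ∑ τ ∈ Finset.Ico t₀ t, η τ • g k τ)
    (xbar : E) (hxbar : xbar = (K : ℝ)⁻¹ • ∑ k, x k) :
    (K : ℝ)⁻¹ * ∑ k, ‖xbar - x k‖ ^ 2 ≤
      4 * ηbar ^ 2 * ((e : ℝ) - 1) ^ 2 * ((K : ℝ)⁻¹ * ∑ k, ζ k ^ 2) := by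
  have hK0 : (0:ℝ) < K := by exact_mod_cast Nat.lt_of_lt_of_le Nat.zero_lt_one hK
  have hKne : (K:ℝ) ≠ 0 := ne_of_gt hK0
  have he1 : (0:ℝ) ≤ (e:ℝ) - 1 := by
    have : (1:ℝ) ≤ (e:ℝ) := by exact_mod_cast he
    linarith
  -- Per-client bound on ‖y - x k‖
  have hbound : ∀ k, ‖y - x k‖ ≤ 2 * ηbar * ((e:ℝ) - 1) * ζ k := by
    intro k
    have hyx : y - x k = ∑ τ ∈ Finset.Ico t₀ t, η τ • g k τ := by
      rw [hx]; abel
    rw [hyx]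
    calc ‖∑ τ ∈ Finset.Ico t₀ t, η τ • g k τ‖
        ≤ ∑ τ ∈ Finset.Ico t₀ t, ‖η τ • g k τ‖ := norm_sum_le _ _
      _ ≤ ∑ τ ∈ Finset.Ico t₀ t, (2 * ηbar) * ζ k := by
          apply Finset.sum_le_sum
          intro τ hτ
          rw [norm_smul, Real.norm_eq_abs, abs_of_nonneg (hηnn τ)]
          have h1 : η τ ≤ 2 * ηbar := le_trans (hmono τ hτ) hη0
          have h2 : ‖g k τ‖ ≤ ζ k := hg k τ hτ
          exact mul_le_mul h1 h2 (norm_nonneg _) (by linarith)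
      _ = ((t - t₀ : ℕ) : ℝ) * ((2 * ηbar) * ζ k) := by
          rw [Finset.sum_const, Nat.card_Ico, nsmul_eq_mul]
      _ ≤ ((e:ℝ) - 1) * ((2 * ηbar) * ζ k) := by
          apply mul_le_mul_of_nonneg_right _ (mul_nonneg (by positivity) (hζ k))
          have : ((t - t₀ : ℕ) : ℝ) ≤ ((e - 1 : ℕ) : ℝ) := by exact_mod_cast hte
          have he' : ((e - 1 : ℕ) : ℝ) = (e:ℝ) - 1 := by
            have := Nat.cast_sub he (R := ℝ); simpa using this
          linarith [this, he'.le]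
      _ = 2 * ηbar * ((e:ℝ) - 1) * ζ k := by ring
  -- Variance inequality: ∑ ‖xbar - x k‖² ≤ ∑ ‖y - x k‖²
  have hsum : (∑ k, x k) = (K:ℝ) • xbar := by
    rw [hxbar, smul_smul, mul_inv_cancel₀ hKne, one_smul]
  have hvar : (∑ k, ‖xbar - x k‖ ^ 2) ≤ ∑ k, ‖y - x k‖ ^ 2 := by
    have hsplit : ∀ k : Fin K, ‖xbar - x k‖ ^ 2
        = ‖y - x k‖ ^ 2 - 2 * inner ℝ (y - x k) (y - xbar) + ‖y - xbar‖ ^ 2 := by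
      intro k
      have : xbar - x k = (y - x k) - (y - xbar) := by abel
      rw [this, @norm_sub_sq_real]
    have hv : (∑ k : Fin K, (y - x k)) = (K:ℝ) • (y - xbar) := by
      rw [Finset.sum_sub_distrib, Finset.sum_const, hsum, Finset.card_univ,
        Fintype.card_fin, smul_sub]
      simp [← Nat.cast_smul_eq_nsmul ℝ]
    have hinner : ∑ k : Fin K, (2:ℝ) * inner ℝ (y - x k) (y - xbar)
        = 2 * (K:ℝ) * ‖y - xbar‖ ^ 2 := by
      rw [← Finset.mul_sum, ← sum_inner, hv, real_inner_smul_left,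
        real_inner_self_eq_norm_sq]
      ring
    calc (∑ k, ‖xbar - x k‖ ^ 2)
        = ∑ k, (‖y - x k‖ ^ 2 - 2 * inner ℝ (y - x k) (y - xbar) + ‖y - xbar‖ ^ 2) :=
          Finset.sum_congr rfl fun k _ => hsplit k
      _ = (∑ k, ‖y - x k‖ ^ 2) - 2 * (K:ℝ) * ‖y - xbar‖ ^ 2
            + (K:ℝ) * ‖y - xbar‖ ^ 2 := by
          rw [Finset.sum_add_distrib, Finset.sum_sub_distrib, hinner,
            Finset.sum_const, Finset.card_univ, Fintype.card_fin, nsmul_eq_mul]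
      _ ≤ ∑ k, ‖y - x k‖ ^ 2 := by
          have : 0 ≤ (K:ℝ) * ‖y - xbar‖ ^ 2 := by positivity
          linarith
  -- Combine
  have hsq : ∀ k : Fin K, ‖y - x k‖ ^ 2 ≤ 4 * ηbar ^ 2 * ((e:ℝ) - 1) ^ 2 * ζ k ^ 2 := by
    intro k
    have h := hbound k
    have h2 : ‖y - x k‖ ^ 2 ≤ (2 * ηbar * ((e:ℝ) - 1) * ζ k) ^ 2 :=
      pow_le_pow_left₀ (norm_nonneg _) h 2
    calc ‖y - x k‖ ^ 2 ≤ (2 * ηbar * ((e:ℝ) - 1) * ζ k) ^ 2 := h2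
      _ = 4 * ηbar ^ 2 * ((e:ℝ) - 1) ^ 2 * ζ k ^ 2 := by ring
  have hfinal : (∑ k, ‖xbar - x k‖ ^ 2)
      ≤ 4 * ηbar ^ 2 * ((e:ℝ) - 1) ^ 2 * ∑ k, ζ k ^ 2 := by
    calc (∑ k, ‖xbar - x k‖ ^ 2) ≤ ∑ k, ‖y - x k‖ ^ 2 := hvar
      _ ≤ ∑ k, 4 * ηbar ^ 2 * ((e:ℝ) - 1) ^ 2 * ζ k ^ 2 :=
          Finset.sum_le_sum fun k _ => hsq k
      _ = 4 * ηbar ^ 2 * ((e:ℝ) - 1) ^ 2 * ∑ k, ζ k ^ 2 := by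
          rw [Finset.mul_sum]
  have hKinv : (0:ℝ) ≤ (K:ℝ)⁻¹ := by positivity
  calc (K : ℝ)⁻¹ * ∑ k, ‖xbar - x k‖ ^ 2
      ≤ (K : ℝ)⁻¹ * (4 * ηbar ^ 2 * ((e:ℝ) - 1) ^ 2 * ∑ k, ζ k ^ 2) :=
        mul_le_mul_of_nonneg_left hfinal hKinv
    _ = 4 * ηbar ^ 2 * ((e : ℝ) - 1) ^ 2 * ((K : ℝ)⁻¹ * ∑ k, ζ k ^ 2) := by ring
end
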